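/- arXiv:2511.15233 — 3 statements merged into one kernel-verified Lean document; each statement's English description precedes it below -/
import Mathlib

section
/- For all real numbers k and l with N(k−l,l) ≠ 0, the multiplier m removes the quadratic nonlinearity: m(k−l,l) · [ (κ − μ|k|^α)k − κ(k−l)(1+ν|k|^α)/(1+ν|k−l|^α) − κl(1+ν|k|^α)/(1+ν|l|^α) + μ|k−l|^α(k−l)(1+ν|k|^α)/(1+ν|k−l|^α) + μ|l|^α l (1+ν|k|^α)/(1+ν|l|^α) ] = (1/2)λk. -/
/-- The denominator `N(p,q)` of the multiplier of the normal form transformation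
of the fractional KdV-BBM equation. -/
noncomputable def fracN (ν α p q : ℝ) : ℝ :=
  (p + q) * (1 + ν * |q| ^ α) * (|p| ^ α - |p + q| ^ α)
    + q * (1 + ν * |p + q| ^ α) * (|q| ^ α - |p| ^ α)

/-- The multiplier `m(p,q)` of the normal form transformation of the fractional
KdV-BBM equation. -/
noncomputable def fracM (κ μ lam ν α p q : ℝ) : ℝ :=
  lam * (p + q) * (1 + ν * |p| ^ α) * (1 + ν * |q| ^ α) /
    (2 * (κ * ν + μ) * fracN ν α p q)

/-- for all `k l` with `N(k−l,l) ≠ 0`, the multiplier `m` removes the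
quadratic nonlinearity:
`m(k−l,l)·[(κ−μ|k|^α)k − κ(k−l)(1+ν|k|^α)/(1+ν|k−l|^α) − κl(1+ν|k|^α)/(1+ν|l|^α)
 + μ|k−l|^α(k−l)(1+ν|k|^α)/(1+ν|k−l|^α) + μ|l|^α l(1+ν|k|^α)/(1+ν|l|^α)] = λk/2`. -/
theorem fracM_removes_quadratic (κ μ lam ν α : ℝ) (hlam : 0 < lam) (hν : 0 < ν)
    (hκνμ : κ * ν + μ ≠ 0) (hα : α ∈ Set.Ioo (0 : ℝ) 1)
    (k l : ℝ) (hN : fracN ν α (k - l) l ≠ 0) :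
    fracM κ μ lam ν α (k - l) l *
      ((κ - μ * |k| ^ α) * k
        - κ * (k - l) * (1 + ν * |k| ^ α) / (1 + ν * |k - l| ^ α)
        - κ * l * (1 + ν * |k| ^ α) / (1 + ν * |l| ^ α)
        + μ * |k - l| ^ α * (k - l) * (1 + ν * |k| ^ α) / (1 + ν * |k - l| ^ α)
        + μ * |l| ^ α * l * (1 + ν * |k| ^ α) / (1 + ν * |l| ^ α))
      = (1 / 2) * lam * k := by
  have h2 : (0:ℝ) < 2 := by norm_num
  have hA : (0:ℝ) < 1 + ν * |k - l| ^ α := by positivity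
  have hB : (0:ℝ) < 1 + ν * |l| ^ α := by positivity
  unfold fracN at hN
  unfold fracM fracN
  rw [show k - l + l = k by ring] at hN ⊢
  have hκνμ' : ν * κ + μ ≠ 0 := by rwa [mul_comm] at hκνμ
  field_simp
  ring
end

section
/- There exist constants C₁, C₂ > 0 (depending only on κ, λ, ν, μ, α) such that for all real k, l with k ≠ 0, l ≠ 0, k ≠ l, N(k−l,l) ≠ 0 and (k−l)² + l² ≤ 1, one has C₁ ( |k−l|^{1+α}/|l| + |l|^{1+α}/|k−l| ) ≤ |m(k−l,l)| ≤ C₂ ( |k−l|^{1−α}/|l| + |l|^{1−α}/|k−l| ). -/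
private lemma fracN_swap (ν α p q : ℝ) : fracN ν α p q = fracN ν α q p := by
  simp only [fracN]
  rw [add_comm q p]
  ring

private lemma fracN_third (ν α p q : ℝ) : fracN ν α p q = fracN ν α p (-(p + q)) := by
  simp only [fracN]
  rw [show p + -(p + q) = -q by ring, abs_neg, abs_neg]
  ring

private lemma fracN_neg (ν α p q : ℝ) : fracN ν α (-p) (-q) = -fracN ν α p q := by
  simp only [fracN]
  rw [show -p + -q = -(p + q) from (neg_add p q).symm]
  simp only [abs_neg]
  ring

open Real in
private lemma canon_core (ν α : ℝ) (hν : 0 < ν) (hα0 : 0 < α) (hα1 : α < 1)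
    (u v : ℝ) (hu : 0 < u) (hv : 0 < v) (hvu : v ≤ u) (h2 : u + v ≤ 2) :
    α * v * u ^ α ≤ -fracN ν α u v ∧ -fracN ν α u v ≤ (4 + 8 * ν) * v := by
  have hw : (0:ℝ) < u + v := by linarith
  have hU : 0 < u ^ α := rpow_pos_of_pos hu α
  have hV : 0 < v ^ α := rpow_pos_of_pos hv α
  have hW : 0 < (u + v) ^ α := rpow_pos_of_pos hw α
  have hVU : v ^ α ≤ u ^ α := rpow_le_rpow hv.le hvu hα0.le
  have hUW : u ^ α ≤ (u + v) ^ α := rpow_le_rpow hu.le (by linarith) hα0.le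
  have hVW : v ^ α ≤ (u + v) ^ α := rpow_le_rpow hv.le (by linarith) hα0.le
  have hW2 : (u + v) ^ α ≤ 2 := by
    calc (u + v) ^ α ≤ (2:ℝ) ^ α := rpow_le_rpow hw.le h2 hα0.le
    _ ≤ (2:ℝ) ^ (1:ℝ) := rpow_le_rpow_of_exponent_le one_le_two hα1.le
    _ = 2 := rpow_one 2
  have hU2 : u ^ α ≤ 2 := le_trans hUW hW2
  have hV2 : v ^ α ≤ 2 := le_trans hVW hW2
  have hvu' : (0:ℝ) ≤ v / u := by positivity
  have H1 : u * u ^ α + (1 + α) * u ^ α * v ≤ (u + v) * (u + v) ^ α := by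
    have hb := one_add_mul_self_le_rpow_one_add (s := v / u) (by linarith)
      (p := 1 + α) (by linarith)
    rw [show (1:ℝ) + v / u = (u + v) / u by field_simp] at hb
    rw [div_rpow hw.le hu.le, rpow_add hw, rpow_one, rpow_add hu, rpow_one] at hb
    have h2' := mul_le_mul_of_nonneg_right hb (mul_pos hu hU).le
    rw [div_mul_cancel₀ _ (by positivity)] at h2'
    calc u * u ^ α + (1 + α) * u ^ α * v = (1 + (1 + α) * (v / u)) * (u * u ^ α) := by
          field_simp
      _ ≤ _ := h2'
  have H2 : (u + v) * (u + v) ^ α ≤ u * u ^ α + (1 + α) * (u + v) ^ α * v := by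
    have hs1 : v / (u + v) ≤ 1 := by rw [div_le_one hw]; linarith
    have hb := one_add_mul_self_le_rpow_one_add (s := -(v / (u + v))) (by linarith)
      (p := 1 + α) (by linarith)
    rw [show (1:ℝ) + -(v / (u + v)) = u / (u + v) by field_simp; ring] at hb
    rw [div_rpow hu.le hw.le, rpow_add hu, rpow_one, rpow_add hw, rpow_one] at hb
    have h2' := mul_le_mul_of_nonneg_right hb (mul_pos hw hW).le
    rw [div_mul_cancel₀ _ (by positivity)] at h2'
    have hid : (1 + (1 + α) * -(v / (u + v))) * ((u + v) * (u + v) ^ α)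
        = (u + v) * (u + v) ^ α - (1 + α) * (u + v) ^ α * v := by field_simp; ring
    rw [hid] at h2'
    linarith
  have H3 : u * (u + v) ^ α ≤ u * u ^ α + α * u ^ α * v := by
    have hb := rpow_one_add_le_one_add_mul_self (s := v / u) (by linarith) hα0.le hα1.le
    rw [show (1:ℝ) + v / u = (u + v) / u by field_simp, div_rpow hw.le hu.le] at hb
    have h2' := mul_le_mul_of_nonneg_right hb hU.le
    rw [div_mul_cancel₀ _ (by positivity)] at h2'
    have h3' := mul_le_mul_of_nonneg_left h2' hu.le
    calc u * (u + v) ^ α ≤ u * ((1 + α * (v / u)) * u ^ α) := h3'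
      _ = u * u ^ α + α * u ^ α * v := by field_simp
  have hsplit : -fracN ν α u v =
      ((u + v) * (u + v) ^ α - u * u ^ α - v * v ^ α)
        + ν * (u * v ^ α * ((u + v) ^ α - u ^ α) + v * u ^ α * ((u + v) ^ α - v ^ α)) := by
    simp only [fracN, abs_of_pos hu, abs_of_pos hv, abs_of_pos hw]
    ring
  have hQ0 : 0 ≤ u * v ^ α * ((u + v) ^ α - u ^ α) + v * u ^ α * ((u + v) ^ α - v ^ α) :=
    add_nonneg (mul_nonneg (mul_pos hu hV).le (sub_nonneg.2 hUW))
      (mul_nonneg (mul_pos hv hU).le (sub_nonneg.2 hVW))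
  constructor
  · rw [hsplit]
    have hDlow : α * v * u ^ α ≤ (u + v) * (u + v) ^ α - u * u ^ α - v * v ^ α := by
      have := mul_le_mul_of_nonneg_left hVU hv.le
      linarith
    linarith [mul_nonneg hν.le hQ0]
  · rw [hsplit]
    have hDup : (u + v) * (u + v) ^ α - u * u ^ α - v * v ^ α ≤ 4 * v := by
      have hWv : (u + v) ^ α * v ≤ 2 * v := mul_le_mul_of_nonneg_right hW2 hv.le
      have h1 : 0 ≤ (1 - α) * (u + v) ^ α * v :=
        mul_nonneg (mul_nonneg (by linarith) hW.le) hv.le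
      have h0 : 0 ≤ v * v ^ α := (mul_pos hv hV).le
      nlinarith
    have hQup : u * v ^ α * ((u + v) ^ α - u ^ α) + v * u ^ α * ((u + v) ^ α - v ^ α)
        ≤ 8 * v := by
      have t1 : u * v ^ α * ((u + v) ^ α - u ^ α) ≤ α * u ^ α * v ^ α * v := by
        have h' : u * ((u + v) ^ α - u ^ α) ≤ α * u ^ α * v := by linarith
        have := mul_le_mul_of_nonneg_left h' hV.le
        linarith
      have s1 : α * u ^ α * v ^ α * v ≤ 4 * v := by
        have k1 : α * u ^ α ≤ 1 * 2 := mul_le_mul hα1.le hU2 hU.le zero_le_one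
        have k2 : α * u ^ α * v ^ α ≤ 2 * 2 :=
          mul_le_mul (by linarith) hV2 hV.le (by norm_num)
        have := mul_le_mul_of_nonneg_right k2 hv.le
        linarith
      have t2 : v * u ^ α * ((u + v) ^ α - v ^ α) ≤ 4 * v := by
        have k1 : u ^ α * ((u + v) ^ α - v ^ α) ≤ 2 * 2 :=
          mul_le_mul hU2 (by linarith) (by linarith) (by norm_num)
        have := mul_le_mul_of_nonneg_left k1 hv.le
        linarith
      linarith
    linarith [mul_le_mul_of_nonneg_left hQup hν.le]

open Real in
private lemma canon (ν α : ℝ) (hν : 0 < ν) (hα0 : 0 < α) (hα1 : α < 1)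
    (u v : ℝ) (hu : 0 < u) (hv : 0 < v) (h2 : u + v ≤ 2) :
    α * min u v * (max u v) ^ α ≤ -fracN ν α u v ∧
      -fracN ν α u v ≤ (4 + 8 * ν) * min u v := by
  rcases le_total v u with h | h
  · rw [min_eq_right h, max_eq_left h]
    exact canon_core ν α hν hα0 hα1 u v hu hv h h2
  · rw [min_eq_left h, max_eq_right h, fracN_swap]
    exact canon_core ν α hν hα0 hα1 v u hv hu h (by linarith)

open Real in
private lemma reduce (ν α : ℝ) (hν : 0 < ν) (hα0 : 0 < α) (hα1 : α < 1)
    (u v : ℝ) (hu : 0 < u) (hv : 0 < v) (h2 : u + v ≤ 2)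
    (p q : ℝ) (hNe : |fracN ν α p q| = |fracN ν α u v|)
    (hmin : min (min |p| |q|) |p + q| = min u v) (hmax : max |p| |q| ≤ u + v) :
    α * min (min |p| |q|) |p + q| * (max |p| |q|) ^ α ≤ 2 * |fracN ν α p q| ∧
      |fracN ν α p q| ≤ (4 + 8 * ν) * min (min |p| |q|) |p + q| := by
  obtain ⟨h1, h2'⟩ := canon ν α hν hα0 hα1 u v hu hv h2
  have hminpos : 0 < min u v := lt_min hu hv
  have hNneg : fracN ν α u v < 0 := by
    have : 0 < α * min u v * (max u v) ^ α := by positivity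
    linarith
  have habs : |fracN ν α u v| = -fracN ν α u v := abs_of_neg hNneg
  have hm : (max |p| |q|) ^ α ≤ 2 * (max u v) ^ α := by
    have huv2 : u + v ≤ 2 * max u v := by
      have := le_max_left u v; have := le_max_right u v; linarith
    calc (max |p| |q|) ^ α ≤ (2 * max u v) ^ α :=
          rpow_le_rpow (le_trans (abs_nonneg p) (le_max_left _ _)) (le_trans hmax huv2) hα0.le
      _ = (2:ℝ) ^ α * (max u v) ^ α := mul_rpow (by norm_num) (by positivity)
      _ ≤ 2 * (max u v) ^ α := by
          have h21 : (2:ℝ) ^ α ≤ (2:ℝ) ^ (1:ℝ) := rpow_le_rpow_of_exponent_le one_le_two hα1.le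
          rw [rpow_one] at h21
          exact mul_le_mul_of_nonneg_right h21 (by positivity)
  constructor
  · rw [hNe, habs, hmin]
    have := mul_le_mul_of_nonneg_left hm (mul_pos hα0 hminpos).le
    nlinarith
  · rw [hNe, habs, hmin]
    exact h2'

open Real in
private lemma N_bounds (ν α : ℝ) (hν : 0 < ν) (hα0 : 0 < α) (hα1 : α < 1)
    (p q : ℝ) (hp : p ≠ 0) (hq : q ≠ 0) (hpq : p + q ≠ 0)
    (hp1 : |p| ≤ 1) (hq1 : |q| ≤ 1) :
    α * min (min |p| |q|) |p + q| * (max |p| |q|) ^ α ≤ 2 * |fracN ν α p q| ∧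
      |fracN ν α p q| ≤ (4 + 8 * ν) * min (min |p| |q|) |p + q| := by
  have hp1' : -1 ≤ p ∧ p ≤ 1 := abs_le.1 hp1
  have hq1' : -1 ≤ q ∧ q ≤ 1 := abs_le.1 hq1
  rcases hp.lt_or_gt with hpn | hpp
  · rcases hq.lt_or_gt with hqn | hqp
    · -- p < 0, q < 0 : u = -p, v = -q
      have hzn : p + q < 0 := by linarith
      refine reduce ν α hν hα0 hα1 (-p) (-q) (by linarith) (by linarith) (by linarith) p q
        ?_ ?_ ?_
      · rw [fracN_neg, abs_neg]
      · rw [abs_of_neg hpn, abs_of_neg hqn, abs_of_neg hzn]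
        exact min_eq_left (le_trans (min_le_left _ _) (by linarith))
      · rw [abs_of_neg hpn, abs_of_neg hqn]
        exact max_le (by linarith) (by linarith)
    · rcases hpq.lt_or_gt with hzn | hzp
      · -- p < 0, q > 0, p + q < 0 : u = q, v = -(p+q)
        refine reduce ν α hν hα0 hα1 q (-(p + q)) hqp (by linarith) (by linarith) p q ?_ ?_ ?_
        · rw [fracN_swap, fracN_third, add_comm q p]
        · rw [abs_of_neg hpn, abs_of_pos hqp, abs_of_neg hzn,
            min_eq_right (by linarith : q ≤ -p)]
        · rw [abs_of_neg hpn, abs_of_pos hqp]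
          exact max_le (by linarith) (by linarith)
      · -- p < 0, q > 0, p + q > 0 : u = -p, v = p + q
        refine reduce ν α hν hα0 hα1 (-p) (p + q) (by linarith) hzp (by linarith) p q ?_ ?_ ?_
        · have h3 : fracN ν α p (-(p + q)) = -fracN ν α (-p) (p + q) := by
            have := fracN_neg ν α (-p) (p + q); rwa [neg_neg] at this
          rw [fracN_third, h3, abs_neg]
        · rw [abs_of_neg hpn, abs_of_pos hqp, abs_of_pos hzp,
            min_eq_left (by linarith : -p ≤ q)]
        · rw [abs_of_neg hpn, abs_of_pos hqp]
          exact max_le (by linarith) (by linarith)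
  · rcases hq.lt_or_gt with hqn | hqp
    · rcases hpq.lt_or_gt with hzn | hzp
      · -- p > 0, q < 0, p + q < 0 : u = p, v = -(p+q)
        refine reduce ν α hν hα0 hα1 p (-(p + q)) hpp (by linarith) (by linarith) p q ?_ ?_ ?_
        · rw [fracN_third]
        · rw [abs_of_pos hpp, abs_of_neg hqn, abs_of_neg hzn,
            min_eq_left (by linarith : p ≤ -q)]
        · rw [abs_of_pos hpp, abs_of_neg hqn]
          exact max_le (by linarith) (by linarith)
      · -- p > 0, q < 0, p + q > 0 : u = -q, v = p + q
        refine reduce ν α hν hα0 hα1 (-q) (p + q) (by linarith) hzp (by linarith) p q ?_ ?_ ?_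
        · have h3 : fracN ν α q (-(q + p)) = -fracN ν α (-q) (q + p) := by
            have := fracN_neg ν α (-q) (q + p); rwa [neg_neg] at this
          rw [fracN_swap, fracN_third, h3, abs_neg, add_comm q p]
        · rw [abs_of_pos hpp, abs_of_neg hqn, abs_of_pos hzp,
            min_eq_right (by linarith : -q ≤ p)]
        · rw [abs_of_pos hpp, abs_of_neg hqn]
          exact max_le (by linarith) (by linarith)
    · -- p > 0, q > 0 : u = p, v = q
      have hzp : 0 < p + q := by linarith
      refine reduce ν α hν hα0 hα1 p q hpp hqp (by linarith) p q rfl ?_ ?_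
      · rw [abs_of_pos hpp, abs_of_pos hqp, abs_of_pos hzp]
        exact min_eq_left (le_trans (min_le_left _ _) (by linarith))
      · rw [abs_of_pos hpp, abs_of_pos hqp]
        exact max_le (by linarith) (by linarith)
set_option maxHeartbeats 1000000 in
open Real in
private lemma main_helper (κ μ lam ν α : ℝ) (hlam : 0 < lam) (hν : 0 < ν)
    (hκνμ : κ * ν + μ ≠ 0) (hα0 : 0 < α) (hα1 : α < 1)
    (p q : ℝ) (hp : p ≠ 0) (hq : q ≠ 0) (hpq : p + q ≠ 0)
    (hp1 : |p| ≤ 1) (hq1 : |q| ≤ 1) :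
    lam / (32 * (1 + 2 * ν) * |κ * ν + μ|) * (|p| ^ (1 + α) / |q| + |q| ^ (1 + α) / |p|)
        ≤ |fracM κ μ lam ν α p q| ∧
      |fracM κ μ lam ν α p q|
        ≤ 2 * lam * (1 + ν) ^ 2 / (α * |κ * ν + μ|)
            * (|p| ^ (1 - α) / |q| + |q| ^ (1 - α) / |p|) := by
  have hap : 0 < |p| := abs_pos.2 hp
  have haq : 0 < |q| := abs_pos.2 hq
  have hak : 0 < |p + q| := abs_pos.2 hpq
  obtain ⟨hNlow, hNup⟩ := N_bounds ν α hν hα0 hα1 p q hp hq hpq hp1 hq1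
  have hs0 : 0 < min |p| |q| := lt_min hap haq
  have hb0 : 0 < max |p| |q| := lt_of_lt_of_le hap (le_max_left _ _)
  have hsb0 : min |p| |q| ≤ max |p| |q| := le_trans (min_le_left _ _) (le_max_left _ _)
  have hb10 : max |p| |q| ≤ 1 := max_le hp1 hq1
  have hm0 : 0 < min (min |p| |q|) |p + q| := lt_min hs0 hak
  have hms0 : min (min |p| |q|) |p + q| ≤ min |p| |q| := min_le_left _ _
  have hmk0 : min (min |p| |q|) |p + q| ≤ |p + q| := min_le_right _ _
  set c := |κ * ν + μ| with hcdef
  have hc : 0 < c := abs_pos.2 hκνμ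
  set s := min |p| |q| with hsdef
  set b := max |p| |q| with hbdef
  set m := min (min |p| |q|) |p + q| with hmdef
  set NN := |fracN ν α p q| with hNNdef
  clear_value c s b m NN
  have hs : 0 < s := hs0
  have hb : 0 < b := hb0
  have hsb : s ≤ b := hsb0
  have hb1 : b ≤ 1 := hb10
  have hm : 0 < m := hm0
  have hps : s ≤ |p| := by rw [hsdef]; exact min_le_left _ _
  have hqs : s ≤ |q| := by rw [hsdef]; exact min_le_right _ _
  have hpb : |p| ≤ b := by rw [hbdef]; exact le_max_left _ _
  have hqb : |q| ≤ b := by rw [hbdef]; exact le_max_right _ _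
  have hba : 0 < b ^ α := rpow_pos_of_pos hb α
  have hNN : 0 < NN := by linarith [mul_pos (mul_pos hα0 hm) hba]
  have hpa : (0:ℝ) ≤ |p| ^ α := rpow_nonneg (abs_nonneg p) α
  have hqa : (0:ℝ) ≤ |q| ^ α := rpow_nonneg (abs_nonneg q) α
  have hX : (1:ℝ) ≤ 1 + ν * |p| ^ α := le_add_of_nonneg_right (by positivity)
  have hY : (1:ℝ) ≤ 1 + ν * |q| ^ α := le_add_of_nonneg_right (by positivity)
  have hX0 : (0:ℝ) < 1 + ν * |p| ^ α := lt_of_lt_of_le one_pos hX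
  have hY0 : (0:ℝ) < 1 + ν * |q| ^ α := lt_of_lt_of_le one_pos hY
  have hXub : 1 + ν * |p| ^ α ≤ 1 + ν := by
    have h' : |p| ^ α ≤ 1 := rpow_le_one (abs_nonneg p) hp1 hα0.le
    have := mul_le_mul_of_nonneg_left h' hν.le
    linarith
  have hYub : 1 + ν * |q| ^ α ≤ 1 + ν := by
    have h' : |q| ^ α ≤ 1 := rpow_le_one (abs_nonneg q) hq1 hα0.le
    have := mul_le_mul_of_nonneg_left h' hν.le
    linarith
  have hA1 : (1:ℝ) ≤ (1 + ν * |p| ^ α) * (1 + ν * |q| ^ α) := by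
    have := mul_le_mul hX hY zero_le_one (by linarith : (0:ℝ) ≤ 1 + ν * |p| ^ α)
    linarith
  have hAub : (1 + ν * |p| ^ α) * (1 + ν * |q| ^ α) ≤ (1 + ν) ^ 2 := by
    rw [sq]
    exact mul_le_mul hXub hYub hY0.le (by linarith)
  have hMabs : |fracM κ μ lam ν α p q| =
      lam * |p + q| * ((1 + ν * |p| ^ α) * (1 + ν * |q| ^ α)) / (2 * c * NN) := by
    rw [fracM, abs_div]
    simp only [abs_mul]
    rw [abs_of_pos hlam, abs_of_pos hX0, abs_of_pos hY0, abs_two, ← hcdef, ← hNNdef]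
    ring
  -- geometric facts
  have htri : b ≤ |p + q| + s := by
    rcases le_total |p| |q| with h | h
    · rw [hbdef, hsdef, max_eq_right h, min_eq_left h]
      calc |q| = |(p + q) + -p| := by ring_nf
        _ ≤ |p + q| + |(-p)| := abs_add_le _ _
        _ = |p + q| + |p| := by rw [abs_neg]
    · rw [hbdef, hsdef, max_eq_left h, min_eq_right h]
      calc |p| = |(p + q) + -q| := by ring_nf
        _ ≤ |p + q| + |(-q)| := abs_add_le _ _
        _ = |p + q| + |q| := by rw [abs_neg]
  have hk2b : |p + q| ≤ 2 * b := by
    calc |p + q| ≤ |p| + |q| := abs_add_le p q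
      _ ≤ b + b := add_le_add hpb hqb
      _ = 2 * b := by ring
  have hcfact : m * b ≤ 2 * (|p + q| * s) := by
    rcases le_total b (2 * |p + q|) with h | h
    · have h1 : m ≤ s := hms0
      linarith [mul_le_mul h1 h hb.le hs.le]
    · have h1 : m ≤ |p + q| := hmk0
      have h2 : b ≤ 2 * s := by linarith
      linarith [mul_le_mul h1 h2 hb.le hak.le]
  have hdfact : |p + q| * s ≤ 2 * (m * b) := by
    rcases le_total s (|p + q|) with h | h
    · have hmeq : m = s := by rw [hmdef, hsdef]; exact min_eq_left (by rw [hsdef] at h; exact h)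
      rw [hmeq]
      linarith [mul_le_mul_of_nonneg_right hk2b hs.le]
    · have hmeq : m = |p + q| := by
        rw [hmdef]; exact min_eq_right (by rw [hsdef] at h; exact h)
      rw [hmeq]
      linarith [mul_le_mul_of_nonneg_left hsb hak.le, mul_pos hak hb]
  -- S₊ bound
  have hb1a : b ^ (1 + α) ≤ b := by
    calc b ^ (1 + α) ≤ b ^ (1:ℝ) := rpow_le_rpow_of_exponent_ge hb hb1 (by linarith)
      _ = b := rpow_one b
  have hterm1 : |p| ^ (1 + α) / |q| ≤ b / s :=
    div_le_div₀ hb.le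
      (le_trans (rpow_le_rpow (abs_nonneg p) hpb (by linarith)) hb1a)
      hs hqs
  have hterm2 : |q| ^ (1 + α) / |p| ≤ b / s :=
    div_le_div₀ hb.le
      (le_trans (rpow_le_rpow (abs_nonneg q) hqb (by linarith)) hb1a)
      hs hps
  have hbs2 : b / s ≤ 2 * |p + q| / m := by
    rw [div_le_div_iff₀ hs hm]
    linarith [hcfact]
  have hP1 : |p| ^ (1 + α) / |q| + |q| ^ (1 + α) / |p| ≤ 4 * |p + q| / m := by
    have : 2 * (2 * |p + q| / m) = 4 * |p + q| / m := by ring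
    linarith
  constructor
  · -- lower bound
    rw [hMabs]
    have hC1 : 0 < lam / (32 * (1 + 2 * ν) * c) := by
      apply div_pos hlam
      have : (0:ℝ) < 32 * (1 + 2 * ν) := by linarith
      exact mul_pos this hc
    have step1 := mul_le_mul_of_nonneg_left hP1 hC1.le
    have step2 : lam / (32 * (1 + 2 * ν) * c) * (4 * |p + q| / m)
        = lam * |p + q| / (2 * c * ((4 + 8 * ν) * m)) := by
      field_simp
      ring
    have hden : 2 * c * NN ≤ 2 * c * ((4 + 8 * ν) * m) := by
      have h2c : (0:ℝ) ≤ 2 * c := by linarith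
      exact mul_le_mul_of_nonneg_left hNup h2c
    have step3 : lam * |p + q| / (2 * c * ((4 + 8 * ν) * m))
        ≤ lam * |p + q| * ((1 + ν * |p| ^ α) * (1 + ν * |q| ^ α)) / (2 * c * NN) := by
      apply div_le_div₀
      · exact mul_nonneg (mul_pos hlam hak).le (le_trans zero_le_one hA1)
      · exact le_mul_of_one_le_right (mul_pos hlam hak).le hA1
      · exact mul_pos (mul_pos two_pos hc) hNN
      · exact hden
    rw [step2] at step1
    exact le_trans step1 step3
  · -- upper bound
    rw [hMabs]
    have hnum : lam * |p + q| * ((1 + ν * |p| ^ α) * (1 + ν * |q| ^ α))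
        ≤ lam * |p + q| * (1 + ν) ^ 2 :=
      mul_le_mul_of_nonneg_left hAub (mul_pos hlam hak).le
    have u1 : lam * |p + q| * ((1 + ν * |p| ^ α) * (1 + ν * |q| ^ α)) / (2 * c * NN)
        ≤ lam * |p + q| * (1 + ν) ^ 2 / (2 * c * NN) := by
      apply div_le_div₀ (mul_nonneg (mul_pos hlam hak).le (by positivity)) hnum
        (mul_pos (mul_pos two_pos hc) hNN) le_rfl
    have hden2 : c * (α * m * b ^ α) ≤ 2 * c * NN := by
      have := mul_le_mul_of_nonneg_left hNlow hc.le
      linarith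
    have u2 : lam * |p + q| * (1 + ν) ^ 2 / (2 * c * NN)
        ≤ lam * |p + q| * (1 + ν) ^ 2 / (c * (α * m * b ^ α)) := by
      apply div_le_div₀ (mul_nonneg (mul_pos hlam hak).le (by positivity)) le_rfl
        (mul_pos hc (mul_pos (mul_pos hα0 hm) hba)) hden2
    have hsplitb : b ^ α * b ^ (1 - α) = b := by
      rw [← rpow_add hb]
      norm_num
    have u3 : lam * |p + q| * (1 + ν) ^ 2 / (c * (α * m * b ^ α))
        ≤ 2 * lam * (1 + ν) ^ 2 / (α * c) * (b ^ (1 - α) / s) := by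
      rw [div_mul_div_comm, div_le_div_iff₀
        (mul_pos hc (mul_pos (mul_pos hα0 hm) hba))
        (mul_pos (mul_pos hα0 hc) hs)]
      have key : |p + q| * s ≤ 2 * (m * (b ^ α * b ^ (1 - α))) := by
        rw [hsplitb]; linarith
      have hpos : (0:ℝ) ≤ lam * (1 + ν) ^ 2 * (α * c) := by
        have h1 : (0:ℝ) < (1 + ν) ^ 2 := by positivity
        have := mul_pos (mul_pos hlam h1) (mul_pos hα0 hc)
        linarith
      calc lam * |p + q| * (1 + ν) ^ 2 * (α * c * s)
          = lam * (1 + ν) ^ 2 * (α * c) * (|p + q| * s) := by ring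
        _ ≤ lam * (1 + ν) ^ 2 * (α * c) * (2 * (m * (b ^ α * b ^ (1 - α)))) :=
            mul_le_mul_of_nonneg_left key hpos
        _ = 2 * lam * (1 + ν) ^ 2 * b ^ (1 - α) * (c * (α * m * b ^ α)) := by ring
    have u4 : b ^ (1 - α) / s ≤ |p| ^ (1 - α) / |q| + |q| ^ (1 - α) / |p| := by
      rcases le_total |p| |q| with h | h
      · rw [hbdef, hsdef, max_eq_right h, min_eq_left h]
        have : (0:ℝ) ≤ |p| ^ (1 - α) / |q| := by positivity
        linarith
      · rw [hbdef, hsdef, max_eq_left h, min_eq_right h]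
        have : (0:ℝ) ≤ |q| ^ (1 - α) / |p| := by positivity
        linarith
    have hC2 : (0:ℝ) ≤ 2 * lam * (1 + ν) ^ 2 / (α * c) := by
      apply div_nonneg _ (mul_pos hα0 hc).le
      positivity
    calc lam * |p + q| * ((1 + ν * |p| ^ α) * (1 + ν * |q| ^ α)) / (2 * c * NN)
        ≤ 2 * lam * (1 + ν) ^ 2 / (α * c) * (b ^ (1 - α) / s) :=
          le_trans u1 (le_trans u2 u3)
      _ ≤ _ := mul_le_mul_of_nonneg_left u4 hC2
/-- low-frequency bounds on the multiplier: there are `C₁, C₂ > 0` such that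
for all `k, l` with `k ≠ 0`, `l ≠ 0`, `k ≠ l`, `N(k−l,l) ≠ 0` and `(k−l)² + l² ≤ 1`,
`C₁(|k−l|^{1+α}/|l| + |l|^{1+α}/|k−l|) ≤ |m(k−l,l)| ≤ C₂(|k−l|^{1−α}/|l| + |l|^{1−α}/|k−l|)`. -/
theorem fracM_low_frequency_bounds (κ μ lam ν α : ℝ) (hlam : 0 < lam) (hν : 0 < ν)
    (hκνμ : κ * ν + μ ≠ 0) (hα : α ∈ Set.Ioo (0 : ℝ) 1) :
    ∃ C₁ C₂ : ℝ, 0 < C₁ ∧ 0 < C₂ ∧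
      ∀ k l : ℝ, k ≠ 0 → l ≠ 0 → k ≠ l → fracN ν α (k - l) l ≠ 0 →
        (k - l) ^ 2 + l ^ 2 ≤ 1 →
        C₁ * (|k - l| ^ (1 + α) / |l| + |l| ^ (1 + α) / |k - l|)
            ≤ |fracM κ μ lam ν α (k - l) l| ∧
          |fracM κ μ lam ν α (k - l) l|
            ≤ C₂ * (|k - l| ^ (1 - α) / |l| + |l| ^ (1 - α) / |k - l|) := by
  obtain ⟨hα0, hα1⟩ := hα
  have hc : 0 < |κ * ν + μ| := abs_pos.2 hκνμ
  refine ⟨lam / (32 * (1 + 2 * ν) * |κ * ν + μ|), 2 * lam * (1 + ν) ^ 2 / (α * |κ * ν + μ|),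
    div_pos hlam (mul_pos (by linarith) hc), ?_, ?_⟩
  · apply div_pos _ (mul_pos hα0 hc)
    have : (0:ℝ) < (1 + ν) ^ 2 := by positivity
    nlinarith
  · intro k l hk hl hkl _hN hsq
    have hp : k - l ≠ 0 := sub_ne_zero.2 hkl
    have hpq : (k - l) + l ≠ 0 := by rw [sub_add_cancel]; exact hk
    have hsq1 : (k - l) ^ 2 ≤ 1 := by nlinarith [sq_nonneg l]
    have hsq2 : l ^ 2 ≤ 1 := by nlinarith [sq_nonneg (k - l)]
    have hp1 : |k - l| ≤ 1 :=
      abs_le.2 ⟨by nlinarith [sq_nonneg (k - l + 1)], by nlinarith [sq_nonneg (k - l - 1)]⟩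
    have hq1 : |l| ≤ 1 :=
      abs_le.2 ⟨by nlinarith [sq_nonneg (l + 1)], by nlinarith [sq_nonneg (l - 1)]⟩
    exact main_helper κ μ lam ν α hlam hν hκνμ hα0 hα1 (k - l) l hp hl hpq hp1 hq1
end

section
/- There exist constants C₁, C₂ > 0 (depending only on κ, λ, ν, μ, α) such that for all real k, l with k ≠ 0, l ≠ 0, k ≠ l, N(k−l,l) ≠ 0 and (k−l)² + l² ≥ 1, one has C₁ ( |k−l|^{1−α}/|l| + |l|^{1−α}/|k−l| ) ≤ |m(k−l,l)| ≤ C₂ ( |k−l|^{1+α}/|l| + |l|^{1+α}/|k−l| ). -/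
private lemma rpow_two' {x : ℝ} (hx : 0 < x) : x ^ (2:ℝ) = x * x := by
  rw [show (2:ℝ) = (1:ℝ) + 1 by norm_num, Real.rpow_add hx, Real.rpow_one]

private lemma two_rpow_le_two {α : ℝ} (hα : α ≤ 1) : (2:ℝ) ^ α ≤ 2 := by
  calc (2:ℝ) ^ α ≤ 2 ^ (1:ℝ) := Real.rpow_le_rpow_of_exponent_le one_le_two hα
    _ = 2 := Real.rpow_one 2

private lemma two_rpow_le_four {β : ℝ} (hβ : β ≤ 2) : (2:ℝ) ^ β ≤ 4 := by
  calc (2:ℝ) ^ β ≤ 2 ^ (2:ℝ) := Real.rpow_le_rpow_of_exponent_le one_le_two hβ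
    _ = 4 := by rw [rpow_two' (by norm_num : (0:ℝ) < 2)]; norm_num

private lemma idA {x : ℝ} (hx : 0 < x) (α : ℝ) : x ^ (α-1) * x ^ (2-α) = x := by
  rw [← Real.rpow_add hx, show α-1+(2-α) = (1:ℝ) by ring, Real.rpow_one]

private lemma idB {x : ℝ} (hx : 0 < x) (α : ℝ) : x ^ α * x ^ (2-α) = x * x := by
  rw [← Real.rpow_add hx, show α+(2-α) = (2:ℝ) by ring, rpow_two' hx]

private lemma idC {x : ℝ} (hx : 0 < x) (α : ℝ) : x ^ (2+α) = x ^ α * (x * x) := by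
  rw [show (2:ℝ)+α = α+2 by ring, Real.rpow_add hx, rpow_two' hx]

private lemma bern {α a b : ℝ} (hα0 : 0 < α) (hα1 : α ≤ 1) (ha : 0 < a) (hb : 0 ≤ b) :
    (a + b) ^ α ≤ a ^ α + α * b * a ^ (α - 1) := by
  have h0 : (0:ℝ) ≤ 1 + b / a := by positivity
  have h1 : (1:ℝ) ^ (1 - α) * (1 + b / a) ^ α ≤ (1 - α) * 1 + α * (1 + b / a) :=
    Real.geom_mean_le_arith_mean2_weighted (by linarith) hα0.le zero_le_one h0 (by ring)
  rw [Real.one_rpow, one_mul] at h1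
  have hab : a + b = a * (1 + b / a) := by field_simp
  have h2 : (a + b) ^ α = a ^ α * (1 + b / a) ^ α := by
    rw [hab, Real.mul_rpow ha.le h0]
  have h3 : a ^ (α - 1) = a ^ α / a := by
    rw [Real.rpow_sub ha, Real.rpow_one]
  have ha' : (0:ℝ) < a ^ α := Real.rpow_pos_of_pos ha α
  calc (a + b) ^ α = a ^ α * (1 + b / a) ^ α := h2
    _ ≤ a ^ α * ((1 - α) * 1 + α * (1 + b / a)) := mul_le_mul_of_nonneg_left h1 ha'.le
    _ = a ^ α + α * b * (a ^ α / a) := by field_simp; ring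
    _ = a ^ α + α * b * a ^ (α - 1) := by rw [h3]

private lemma half_le_rpow {α x : ℝ} (hα0 : 0 < α) (hα1 : α ≤ 1) (hx : 0 < x)
    (hx2 : 1 ≤ 2 * x ^ 2) : 1 / 2 ≤ x ^ α := by
  rcases le_total 1 x with h | h
  · have h1 : (1:ℝ) ^ α ≤ x ^ α := Real.rpow_le_rpow zero_le_one h hα0.le
    rw [Real.one_rpow] at h1; linarith
  · have h1 : x ^ (1:ℝ) ≤ x ^ α := Real.rpow_le_rpow_of_exponent_ge hx h hα1
    rw [Real.rpow_one] at h1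
    nlinarith

private lemma small_rpow {α b c : ℝ} (hα0 : 0 < α) (hb : 0 ≤ b) (hc : 0 < c) (h : 2 * b ≤ c) :
    b ^ α ≤ 2 ^ (-α) * c ^ α := by
  have h1 : b ^ α ≤ (c / 2) ^ α := Real.rpow_le_rpow hb (by linarith) hα0.le
  have h2 : (c / 2) ^ α = c ^ α / 2 ^ α := Real.div_rpow hc.le (by norm_num : (0:ℝ) ≤ 2) α
  have h3 : (2:ℝ) ^ (-α) = ((2:ℝ) ^ α)⁻¹ := Real.rpow_neg (by norm_num) α
  rw [h3]
  rw [h2, div_eq_mul_inv, mul_comm] at h1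
  exact h1

private lemma Dnn {ν α : ℝ} (hν : 0 < ν) (hα0 : 0 < α) {u v : ℝ} (hu : 0 < u) (hv : 0 < v) :
    0 ≤ u * (1 + ν * v ^ α) * ((u+v) ^ α - u ^ α)
      + v * (1 + ν * u ^ α) * ((u+v) ^ α - v ^ α) := by
  have h1 : u ^ α ≤ (u+v) ^ α := Real.rpow_le_rpow hu.le (by linarith) hα0.le
  have h2 : v ^ α ≤ (u+v) ^ α := Real.rpow_le_rpow hv.le (by linarith) hα0.le
  have hu' : (0:ℝ) < u ^ α := Real.rpow_pos_of_pos hu α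
  have hv' : (0:ℝ) < v ^ α := Real.rpow_pos_of_pos hv α
  have a1 := mul_nonneg (mul_nonneg hu.le (by nlinarith : (0:ℝ) ≤ 1 + ν * v ^ α))
    (by linarith : (0:ℝ) ≤ (u+v) ^ α - u ^ α)
  have a2 := mul_nonneg (mul_nonneg hv.le (by nlinarith : (0:ℝ) ≤ 1 + ν * u ^ α))
    (by linarith : (0:ℝ) ≤ (u+v) ^ α - v ^ α)
  linarith

private lemma scal1 {ν u : ℝ} (hν : 0 < ν) (hu : 1/2 ≤ u) :
    1 + ν * u ≤ 4 * (1+ν)^2 * (u*u) := by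
  have h1 : (0:ℝ) ≤ (2*u-1)*(2*u+1) := mul_nonneg (by linarith) (by linarith)
  have h2 : (0:ℝ) ≤ ν*u*(8*u-1) := mul_nonneg (mul_nonneg hν.le (by linarith)) (by linarith)
  have h3 : (0:ℝ) ≤ ν*ν*(u*u) := by positivity
  nlinarith [h1, h2, h3]

private lemma scal2 {ν u : ℝ} (hν : 0 < ν) (hu : 1/2 ≤ u) :
    (1 + ν * u) * (1 + ν * u) ≤ 8 * (1+ν)^2 * (u*u) := by
  have h1 : (0:ℝ) ≤ (2*u-1)*(2*u+1) := mul_nonneg (by linarith) (by linarith)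
  have h2 : (0:ℝ) ≤ ν*u*(8*u-1) := mul_nonneg (mul_nonneg hν.le (by linarith)) (by linarith)
  have h3 : (0:ℝ) ≤ ν*ν*(u*u) := by positivity
  nlinarith [h1, h2, h3]

private lemma estA {ν α : ℝ} (hν : 0 < ν) (hα0 : 0 < α) (hα1 : α < 1)
    {x y z : ℝ} (hx : 0 < x) (hy : 0 < y) (hz : z = x + y) (hyx : y ≤ x)
    (hcon : 1 ≤ x ^ 2 + y ^ 2) :
    (x * (1 + ν * y ^ α) * (z ^ α - x ^ α) + y * (1 + ν * x ^ α) * (z ^ α - y ^ α))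
        * (x ^ (2 - α) + y ^ (2 - α))
      ≤ 15 * (z * ((1 + ν * x ^ α) * (1 + ν * y ^ α)) * (x * y)) ∧
    (1 - (2:ℝ) ^ (-α)) / (8 * (1 + ν) ^ 2)
        * (z * ((1 + ν * x ^ α) * (1 + ν * y ^ α)) * (x * y))
      ≤ (x * (1 + ν * y ^ α) * (z ^ α - x ^ α) + y * (1 + ν * x ^ α) * (z ^ α - y ^ α))
        * (x ^ (2 + α) + y ^ (2 + α)) := by
  subst hz
  have hxa : (0:ℝ) < x ^ α := Real.rpow_pos_of_pos hx α
  have hya : (0:ℝ) < y ^ α := Real.rpow_pos_of_pos hy α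
  have hxm1 : (0:ℝ) < x ^ (α - 1) := Real.rpow_pos_of_pos hx _
  have hyax : y ^ α ≤ x ^ α := Real.rpow_le_rpow hy.le hyx hα0.le
  have hxz : x ^ α ≤ (x + y) ^ α := Real.rpow_le_rpow hx.le (by linarith) hα0.le
  have hyz : y ^ α ≤ (x + y) ^ α := Real.rpow_le_rpow hy.le (by linarith) hα0.le
  have hyx2 : y ^ (2 - α) ≤ x ^ (2 - α) := Real.rpow_le_rpow hy.le hyx (by linarith)
  have hber : (x + y) ^ α ≤ x ^ α + α * y * x ^ (α - 1) := bern hα0 hα1.le hx hy.le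
  have h2x : (x + y) ^ α ≤ 2 * x ^ α := by
    have h1 : (x + y) ^ α ≤ (2 * x) ^ α := Real.rpow_le_rpow (by linarith) (by linarith) hα0.le
    have h2 : (2 * x) ^ α = 2 ^ α * x ^ α := Real.mul_rpow (by norm_num) hx.le
    have h3 : (2:ℝ) ^ α ≤ 2 := two_rpow_le_two hα1.le
    nlinarith
  have hu : 1 / 2 ≤ x ^ α := half_le_rpow hα0 hα1.le hx (by nlinarith)
  have hτ : (2:ℝ) ^ (-α) < 1 := Real.rpow_lt_one_of_one_lt_of_neg one_lt_two (by linarith)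
  constructor
  · -- upper bound
    have t1 : x * (1 + ν * y ^ α) * ((x + y) ^ α - x ^ α)
        ≤ x * (1 + ν * y ^ α) * (α * y * x ^ (α - 1)) :=
      mul_le_mul_of_nonneg_left (by linarith) (by positivity)
    have t2 : y * (1 + ν * x ^ α) * ((x + y) ^ α - y ^ α)
        ≤ y * (1 + ν * x ^ α) * (2 * x ^ α) :=
      mul_le_mul_of_nonneg_left (by linarith) (by positivity)
    have hS : x ^ (2 - α) + y ^ (2 - α) ≤ 2 * x ^ (2 - α) := by linarith
    have hM0 : 0 ≤ x * (1 + ν * y ^ α) * (α * y * x ^ (α - 1))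
        + y * (1 + ν * x ^ α) * (2 * x ^ α) := by positivity
    have step : (x * (1 + ν * y ^ α) * ((x + y) ^ α - x ^ α)
          + y * (1 + ν * x ^ α) * ((x + y) ^ α - y ^ α)) * (x ^ (2 - α) + y ^ (2 - α))
        ≤ (x * (1 + ν * y ^ α) * (α * y * x ^ (α - 1))
          + y * (1 + ν * x ^ α) * (2 * x ^ α)) * (2 * x ^ (2 - α)) :=
      mul_le_mul (by linarith) hS (by positivity) hM0
    have expand : (x * (1 + ν * y ^ α) * (α * y * x ^ (α - 1))
          + y * (1 + ν * x ^ α) * (2 * x ^ α)) * (2 * x ^ (2 - α))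
        = 2 * α * (1 + ν * y ^ α) * y * x * (x ^ (α-1) * x ^ (2-α))
          + 4 * (1 + ν * x ^ α) * y * (x ^ α * x ^ (2-α)) := by ring
    rw [idA hx α, idB hx α] at expand
    rw [expand] at step
    refine le_trans step ?_
    have m1 : (0:ℝ) ≤ x * x * y := by positivity
    have h1 : (0:ℝ) ≤ (x*x*y) * (1-α) := mul_nonneg m1 (by linarith)
    have h2 : (0:ℝ) ≤ (x*x*y) * (ν * x ^ α) := mul_nonneg m1 (by positivity)
    have h3 : (0:ℝ) ≤ (x*x*y) * (ν * y ^ α) := mul_nonneg m1 (by positivity)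
    have h4 : (0:ℝ) ≤ (x*x*y) * ((1-α) * (ν * y ^ α)) :=
      mul_nonneg m1 (mul_nonneg (by linarith) (by positivity))
    have h5 : (0:ℝ) ≤ (x*x*y) * ((ν * x ^ α) * (ν * y ^ α)) := mul_nonneg m1 (by positivity)
    have h6 : (0:ℝ) ≤ ((1 + ν * x ^ α) * (1 + ν * y ^ α)) * (x*y) * y :=
      mul_nonneg (mul_nonneg (by positivity) (by positivity)) hy.le
    linarith [h1, h2, h3, h4, h5, h6, m1]
  · -- lower bound
    have hsm : y ^ α ≤ 2 ^ (-α) * (x+y) ^ α := small_rpow hα0 hy.le (by linarith) (by linarith)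
    have h1 : (1 - (2:ℝ) ^ (-α)) * (x+y) ^ α ≤ (x+y) ^ α - y ^ α := by linarith
    have h1' : (1 - (2:ℝ) ^ (-α)) * x ^ α ≤ (x+y) ^ α - y ^ α := by
      have := mul_le_mul_of_nonneg_left hxz (by linarith : (0:ℝ) ≤ 1 - (2:ℝ) ^ (-α))
      linarith
    have lb : (1 - (2:ℝ) ^ (-α)) * (y * (1 + ν * x ^ α) * x ^ α)
        ≤ x * (1 + ν * y ^ α) * ((x+y) ^ α - x ^ α) + y * (1 + ν * x ^ α) * ((x+y) ^ α - y ^ α) := by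
      have e1 : 0 ≤ x * (1 + ν * y ^ α) * ((x+y) ^ α - x ^ α) :=
        mul_nonneg (by positivity) (by linarith)
      have e2 := mul_le_mul_of_nonneg_left h1' (by positivity : (0:ℝ) ≤ y * (1 + ν * x ^ α))
      linarith
    have hT0 : 0 ≤ x * (1 + ν * y ^ α) * ((x+y) ^ α - x ^ α)
        + y * (1 + ν * x ^ α) * ((x+y) ^ α - y ^ α) := by
      have : 0 ≤ (1 - (2:ℝ) ^ (-α)) * (y * (1 + ν * x ^ α) * x ^ α) :=
        mul_nonneg (by linarith) (by positivity)
      linarith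
    have step2 : (1 - (2:ℝ) ^ (-α)) * (y * (1 + ν * x ^ α) * x ^ α) * x ^ (2+α)
        ≤ (x * (1 + ν * y ^ α) * ((x+y) ^ α - x ^ α)
          + y * (1 + ν * x ^ α) * ((x+y) ^ α - y ^ α)) * (x ^ (2+α) + y ^ (2+α)) := by
      apply mul_le_mul lb (le_add_of_nonneg_right (by positivity)) (by positivity) hT0
    refine le_trans ?_ step2
    rw [idC hx α]
    have hscal : 1 + ν * x ^ α ≤ 4 * (1+ν)^2 * (x ^ α * x ^ α) := scal1 hν hu
    have core : (x+y) * ((1 + ν * x ^ α) * (1 + ν * y ^ α)) * (x*y)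
        ≤ y * (1 + ν * x ^ α) * x ^ α * (x ^ α * (x*x)) * (8 * (1+ν)^2) := by
      have c1 : (x+y) * ((1 + ν * x ^ α) * (1 + ν * y ^ α)) * (x*y)
          ≤ (2*x) * ((1 + ν * x ^ α) * (1 + ν * x ^ α)) * (x*y) := by
        have hfab : (1 + ν * y ^ α) ≤ (1 + ν * x ^ α) := by
          have := mul_le_mul_of_nonneg_left hyax hν.le; linarith
        have := mul_le_mul (by linarith : x + y ≤ 2*x)
          (mul_le_mul_of_nonneg_left hfab (by positivity : (0:ℝ) ≤ 1 + ν * x ^ α))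
          (by positivity) (by linarith : (0:ℝ) ≤ 2*x)
        exact mul_le_mul_of_nonneg_right this (by positivity)
      have c2 : (2*x) * ((1 + ν * x ^ α) * (1 + ν * x ^ α)) * (x*y)
          ≤ (2*x) * ((1 + ν * x ^ α) * (4 * (1+ν)^2 * (x ^ α * x ^ α))) * (x*y) := by
        apply mul_le_mul_of_nonneg_right _ (by positivity : (0:ℝ) ≤ x*y)
        apply mul_le_mul_of_nonneg_left _ (by positivity : (0:ℝ) ≤ 2*x)
        exact mul_le_mul_of_nonneg_left hscal (by positivity)
      calc (x+y) * ((1 + ν * x ^ α) * (1 + ν * y ^ α)) * (x*y) ≤ _ := c1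
        _ ≤ _ := c2
        _ = y * (1 + ν * x ^ α) * x ^ α * (x ^ α * (x*x)) * (8 * (1+ν)^2) := by ring
    calc (1 - (2:ℝ) ^ (-α)) / (8 * (1 + ν) ^ 2)
          * ((x+y) * ((1 + ν * x ^ α) * (1 + ν * y ^ α)) * (x * y))
        ≤ (1 - (2:ℝ) ^ (-α)) / (8 * (1 + ν) ^ 2)
          * (y * (1 + ν * x ^ α) * x ^ α * (x ^ α * (x*x)) * (8 * (1+ν)^2)) := by
          apply mul_le_mul_of_nonneg_left core
          apply div_nonneg (by linarith) (by positivity)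
      _ = (1 - (2:ℝ) ^ (-α)) * (y * (1 + ν * x ^ α) * x ^ α) * (x ^ α * (x*x)) := by
          field_simp

private lemma estB {ν α : ℝ} (hν : 0 < ν) (hα0 : 0 < α) (hα1 : α < 1)
    {x y z : ℝ} (hy : 0 < y) (hz : 0 < z) (hx : x = y + z)
    (hcon : 1 ≤ x ^ 2 + y ^ 2) :
    (y * (1 + ν * z ^ α) * (x ^ α - y ^ α) + z * (1 + ν * y ^ α) * (x ^ α - z ^ α))
        * (x ^ (2 - α) + y ^ (2 - α))
      ≤ 15 * (z * ((1 + ν * x ^ α) * (1 + ν * y ^ α)) * (x * y)) ∧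
    (1 - (2:ℝ) ^ (-α)) / (8 * (1 + ν) ^ 2)
        * (z * ((1 + ν * x ^ α) * (1 + ν * y ^ α)) * (x * y))
      ≤ (y * (1 + ν * z ^ α) * (x ^ α - y ^ α) + z * (1 + ν * y ^ α) * (x ^ α - z ^ α))
        * (x ^ (2 + α) + y ^ (2 + α)) := by
  subst hx
  have hx0 : (0:ℝ) < y + z := by linarith
  have hya : (0:ℝ) < y ^ α := Real.rpow_pos_of_pos hy α
  have hza : (0:ℝ) < z ^ α := Real.rpow_pos_of_pos hz α
  have hxa : (0:ℝ) < (y+z) ^ α := Real.rpow_pos_of_pos hx0 α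
  have hyx : y ^ α ≤ (y+z) ^ α := Real.rpow_le_rpow hy.le (by linarith) hα0.le
  have hzx : z ^ α ≤ (y+z) ^ α := Real.rpow_le_rpow hz.le (by linarith) hα0.le
  have hu : 1 / 2 ≤ (y+z) ^ α := half_le_rpow hα0 hα1.le hx0 (by nlinarith)
  have hτ : (2:ℝ) ^ (-α) < 1 := Real.rpow_lt_one_of_one_lt_of_neg one_lt_two (by linarith)
  have hfy1 : (1:ℝ) ≤ 1 + ν * y ^ α := by nlinarith
  have hfz1 : (1:ℝ) ≤ 1 + ν * z ^ α := by nlinarith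
  have efy := mul_le_mul_of_nonneg_left hyx hν.le
  have efz := mul_le_mul_of_nonneg_left hzx hν.le
  rcases le_total z y with hzy | hyz
  · -- z ≤ y
    constructor
    · -- upper
      have hber : (y + z) ^ α ≤ y ^ α + α * z * y ^ (α - 1) := bern hα0 hα1.le hy hz.le
      have h2y : (y + z) ^ α ≤ 2 * y ^ α := by
        have h1 : (y + z) ^ α ≤ (2 * y) ^ α := Real.rpow_le_rpow hx0.le (by linarith) hα0.le
        have h2 : (2 * y) ^ α = 2 ^ α * y ^ α := Real.mul_rpow (by norm_num) hy.le
        have h3 : (2:ℝ) ^ α ≤ 2 := two_rpow_le_two hα1.le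
        nlinarith
      have t1 : y * (1 + ν * z ^ α) * ((y+z) ^ α - y ^ α)
          ≤ y * (1 + ν * z ^ α) * (α * z * y ^ (α - 1)) :=
        mul_le_mul_of_nonneg_left (by linarith) (by positivity)
      have t2 : z * (1 + ν * y ^ α) * ((y+z) ^ α - z ^ α)
          ≤ z * (1 + ν * y ^ α) * (2 * y ^ α) :=
        mul_le_mul_of_nonneg_left (by linarith) (by positivity)
      have hS : (y+z) ^ (2 - α) + y ^ (2 - α) ≤ 5 * y ^ (2 - α) := by
        have hS1 : (y+z) ^ (2-α) ≤ (2*y) ^ (2-α) :=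
          Real.rpow_le_rpow hx0.le (by linarith) (by linarith)
        have hS2 : (2*y) ^ (2-α) = 2 ^ (2-α) * y ^ (2-α) := Real.mul_rpow (by norm_num) hy.le
        have hS3 : (2:ℝ) ^ (2-α) ≤ 4 := two_rpow_le_four (by linarith)
        have hS4 := mul_le_mul_of_nonneg_right hS3
          (Real.rpow_nonneg hy.le (2-α))
        linarith
      have hM0 : 0 ≤ y * (1 + ν * z ^ α) * (α * z * y ^ (α - 1))
          + z * (1 + ν * y ^ α) * (2 * y ^ α) := by positivity
      have step : (y * (1 + ν * z ^ α) * ((y+z) ^ α - y ^ α)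
            + z * (1 + ν * y ^ α) * ((y+z) ^ α - z ^ α)) * ((y+z) ^ (2 - α) + y ^ (2 - α))
          ≤ (y * (1 + ν * z ^ α) * (α * z * y ^ (α - 1))
            + z * (1 + ν * y ^ α) * (2 * y ^ α)) * (5 * y ^ (2 - α)) :=
        mul_le_mul (by linarith) hS (by positivity) hM0
      have expand : (y * (1 + ν * z ^ α) * (α * z * y ^ (α - 1))
            + z * (1 + ν * y ^ α) * (2 * y ^ α)) * (5 * y ^ (2 - α))
          = 5 * α * (1 + ν * z ^ α) * z * (y ^ (α-1) * y ^ (2-α)) * y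
            + 10 * (1 + ν * y ^ α) * z * (y ^ α * y ^ (2-α)) := by ring
      rw [idA hy α, idB hy α] at expand
      rw [expand] at step
      refine le_trans step ?_
      have m0 : (0:ℝ) ≤ z * (y * y) := by positivity
      have h1 : (0:ℝ) ≤ (z*(y*y)) * (1-α) := mul_nonneg m0 (by linarith)
      have h2 : (0:ℝ) ≤ (z*(y*y)) * (ν * y ^ α) := mul_nonneg m0 (by positivity)
      have h3 : (0:ℝ) ≤ (z*(y*y)) * (ν * (y+z) ^ α) := mul_nonneg m0 (by positivity)
      have h4 : (0:ℝ) ≤ (z*(y*y)) * ((ν * (y+z) ^ α) * (ν * y ^ α)) := mul_nonneg m0 (by positivity)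
      have h5 : (0:ℝ) ≤ (z*(y*y)) * (α * (ν * (y+z) ^ α - ν * z ^ α)) :=
        mul_nonneg m0 (mul_nonneg hα0.le (by linarith))
      have h6 : (0:ℝ) ≤ (z*(y*y)) * ((1-α) * (ν * (y+z) ^ α)) :=
        mul_nonneg m0 (mul_nonneg (by linarith) (by positivity))
      have h7 : (0:ℝ) ≤ (z * ((1 + ν * (y+z) ^ α) * (1 + ν * y ^ α))) * (z*y) :=
        mul_nonneg (mul_nonneg hz.le (by positivity)) (by positivity)
      linarith [h1, h2, h3, h4, h5, h6, h7, m0]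
    · -- lower
      have hsm : z ^ α ≤ 2 ^ (-α) * (y+z) ^ α := small_rpow hα0 hz.le hx0 (by linarith)
      have h1 : (1 - (2:ℝ) ^ (-α)) * (y+z) ^ α ≤ (y+z) ^ α - z ^ α := by linarith
      have lb : (1 - (2:ℝ) ^ (-α)) * (z * (1 + ν * y ^ α) * (y+z) ^ α)
          ≤ y * (1 + ν * z ^ α) * ((y+z) ^ α - y ^ α)
            + z * (1 + ν * y ^ α) * ((y+z) ^ α - z ^ α) := by
        have e1 : 0 ≤ y * (1 + ν * z ^ α) * ((y+z) ^ α - y ^ α) :=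
          mul_nonneg (by positivity) (by linarith)
        have e2 := mul_le_mul_of_nonneg_left h1 (by positivity : (0:ℝ) ≤ z * (1 + ν * y ^ α))
        linarith
      have hT0 : 0 ≤ y * (1 + ν * z ^ α) * ((y+z) ^ α - y ^ α)
          + z * (1 + ν * y ^ α) * ((y+z) ^ α - z ^ α) := by
        have : 0 ≤ (1 - (2:ℝ) ^ (-α)) * (z * (1 + ν * y ^ α) * (y+z) ^ α) :=
          mul_nonneg (by linarith) (by positivity)
        linarith
      have step2 : (1 - (2:ℝ) ^ (-α)) * (z * (1 + ν * y ^ α) * (y+z) ^ α) * (y+z) ^ (2+α)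
          ≤ (y * (1 + ν * z ^ α) * ((y+z) ^ α - y ^ α)
            + z * (1 + ν * y ^ α) * ((y+z) ^ α - z ^ α)) * ((y+z) ^ (2+α) + y ^ (2+α)) :=
        mul_le_mul lb (le_add_of_nonneg_right (by positivity)) (by positivity) hT0
      refine le_trans ?_ step2
      rw [idC hx0 α]
      have hscal : 1 + ν * (y+z) ^ α ≤ 4 * (1+ν)^2 * ((y+z) ^ α * (y+z) ^ α) := scal1 hν hu
      have core : z * ((1 + ν * (y+z) ^ α) * (1 + ν * y ^ α)) * ((y+z) * y)
          ≤ z * (1 + ν * y ^ α) * (y+z) ^ α * ((y+z) ^ α * ((y+z) * (y+z))) * (8 * (1+ν)^2) := by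
        have c1 : (1 + ν * (y+z) ^ α) * ((y+z) * y)
            ≤ (4 * (1+ν)^2 * ((y+z) ^ α * (y+z) ^ α)) * ((y+z) * (y+z)) := by
          apply mul_le_mul hscal (mul_le_mul_of_nonneg_left (by linarith) hx0.le)
            (by positivity) (by positivity)
        have c2 := mul_le_mul_of_nonneg_left c1
          (by positivity : (0:ℝ) ≤ z * (1 + ν * y ^ α))
        calc z * ((1 + ν * (y+z) ^ α) * (1 + ν * y ^ α)) * ((y+z) * y)
            = z * (1 + ν * y ^ α) * ((1 + ν * (y+z) ^ α) * ((y+z) * y)) := by ring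
          _ ≤ z * (1 + ν * y ^ α) * ((4 * (1+ν)^2 * ((y+z) ^ α * (y+z) ^ α)) * ((y+z) * (y+z))) := c2
          _ ≤ z * (1 + ν * y ^ α) * (y+z) ^ α * ((y+z) ^ α * ((y+z) * (y+z))) * (8 * (1+ν)^2) := by
            have hc : (0:ℝ) ≤ (4 * (1+ν)^2) * ((y+z) ^ α * (y+z) ^ α) * ((y+z) * (y+z)) * (z * (1 + ν * y ^ α)) :=
              mul_nonneg (mul_nonneg (mul_nonneg (by positivity) (by positivity)) (by positivity)) (by positivity)
            linarith [hc]
      calc (1 - (2:ℝ) ^ (-α)) / (8 * (1 + ν) ^ 2)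
            * (z * ((1 + ν * (y+z) ^ α) * (1 + ν * y ^ α)) * ((y+z) * y))
          ≤ (1 - (2:ℝ) ^ (-α)) / (8 * (1 + ν) ^ 2)
            * (z * (1 + ν * y ^ α) * (y+z) ^ α * ((y+z) ^ α * ((y+z) * (y+z))) * (8 * (1+ν)^2)) := by
            apply mul_le_mul_of_nonneg_left core (div_nonneg (by linarith) (by positivity))
        _ = (1 - (2:ℝ) ^ (-α)) * (z * (1 + ν * y ^ α) * (y+z) ^ α) * ((y+z) ^ α * ((y+z) * (y+z))) := by
            field_simp
  · -- y ≤ z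
    constructor
    · -- upper
      have hber : (y + z) ^ α ≤ z ^ α + α * y * z ^ (α - 1) := by
        have := bern hα0 hα1.le hz hy.le
        rwa [add_comm z y] at this
      have h2z : (y + z) ^ α ≤ 2 * z ^ α := by
        have h1 : (y + z) ^ α ≤ (2 * z) ^ α := Real.rpow_le_rpow hx0.le (by linarith) hα0.le
        have h2 : (2 * z) ^ α = 2 ^ α * z ^ α := Real.mul_rpow (by norm_num) hz.le
        have h3 : (2:ℝ) ^ α ≤ 2 := two_rpow_le_two hα1.le
        nlinarith
      have t1 : y * (1 + ν * z ^ α) * ((y+z) ^ α - y ^ α)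
          ≤ y * (1 + ν * z ^ α) * (2 * z ^ α) :=
        mul_le_mul_of_nonneg_left (by linarith) (by positivity)
      have t2 : z * (1 + ν * y ^ α) * ((y+z) ^ α - z ^ α)
          ≤ z * (1 + ν * y ^ α) * (α * y * z ^ (α - 1)) :=
        mul_le_mul_of_nonneg_left (by linarith) (by positivity)
      have hS : (y+z) ^ (2 - α) + y ^ (2 - α) ≤ 5 * z ^ (2 - α) := by
        have hS1 : (y+z) ^ (2-α) ≤ (2*z) ^ (2-α) :=
          Real.rpow_le_rpow hx0.le (by linarith) (by linarith)
        have hS2 : (2*z) ^ (2-α) = 2 ^ (2-α) * z ^ (2-α) := Real.mul_rpow (by norm_num) hz.le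
        have hS3 : (2:ℝ) ^ (2-α) ≤ 4 := two_rpow_le_four (by linarith)
        have hS4 := mul_le_mul_of_nonneg_right hS3 (Real.rpow_nonneg hz.le (2-α))
        have hS5 : y ^ (2-α) ≤ z ^ (2-α) := Real.rpow_le_rpow hy.le hyz (by linarith)
        linarith
      have hM0 : 0 ≤ y * (1 + ν * z ^ α) * (2 * z ^ α)
          + z * (1 + ν * y ^ α) * (α * y * z ^ (α - 1)) := by positivity
      have step : (y * (1 + ν * z ^ α) * ((y+z) ^ α - y ^ α)
            + z * (1 + ν * y ^ α) * ((y+z) ^ α - z ^ α)) * ((y+z) ^ (2 - α) + y ^ (2 - α))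
          ≤ (y * (1 + ν * z ^ α) * (2 * z ^ α)
            + z * (1 + ν * y ^ α) * (α * y * z ^ (α - 1))) * (5 * z ^ (2 - α)) :=
        mul_le_mul (by linarith) hS (by positivity) hM0
      have expand : (y * (1 + ν * z ^ α) * (2 * z ^ α)
            + z * (1 + ν * y ^ α) * (α * y * z ^ (α - 1))) * (5 * z ^ (2 - α))
          = 10 * (1 + ν * z ^ α) * y * (z ^ α * z ^ (2-α))
            + 5 * α * (1 + ν * y ^ α) * y * (z ^ (α-1) * z ^ (2-α)) * z := by ring
      rw [idA hz α, idB hz α] at expand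
      rw [expand] at step
      refine le_trans step ?_
      have m0 : (0:ℝ) ≤ y * (z * z) := by positivity
      have h1 : (0:ℝ) ≤ (y*(z*z)) * (1-α) := mul_nonneg m0 (by linarith)
      have h2 : (0:ℝ) ≤ (y*(z*z)) * (ν * y ^ α) := mul_nonneg m0 (by positivity)
      have h3 : (0:ℝ) ≤ (y*(z*z)) * ((1-α) * (ν * y ^ α)) :=
        mul_nonneg m0 (mul_nonneg (by linarith) (by positivity))
      have h4 : (0:ℝ) ≤ (y*(z*z)) * ((ν * (y+z) ^ α) * (ν * y ^ α)) := mul_nonneg m0 (by positivity)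
      have h5 : (0:ℝ) ≤ (y*(z*z)) * (ν * (y+z) ^ α - ν * z ^ α) := mul_nonneg m0 (by linarith)
      have h6 : (0:ℝ) ≤ (y*(z*z)) * (ν * (y+z) ^ α) := mul_nonneg m0 (by positivity)
      have h7 : (0:ℝ) ≤ (((1 + ν * (y+z) ^ α) * (1 + ν * y ^ α)) * (z*y)) * y :=
        mul_nonneg (mul_nonneg (by positivity) (by positivity)) hy.le
      linarith [h1, h2, h3, h4, h5, h6, h7, m0]
    · -- lower
      have hsm : y ^ α ≤ 2 ^ (-α) * (y+z) ^ α := small_rpow hα0 hy.le hx0 (by linarith)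
      have h1 : (1 - (2:ℝ) ^ (-α)) * (y+z) ^ α ≤ (y+z) ^ α - y ^ α := by linarith
      have lb : (1 - (2:ℝ) ^ (-α)) * (y * (1 + ν * z ^ α) * (y+z) ^ α)
          ≤ y * (1 + ν * z ^ α) * ((y+z) ^ α - y ^ α)
            + z * (1 + ν * y ^ α) * ((y+z) ^ α - z ^ α) := by
        have e1 : 0 ≤ z * (1 + ν * y ^ α) * ((y+z) ^ α - z ^ α) :=
          mul_nonneg (by positivity) (by linarith)
        have e2 := mul_le_mul_of_nonneg_left h1 (by positivity : (0:ℝ) ≤ y * (1 + ν * z ^ α))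
        linarith
      have hT0 : 0 ≤ y * (1 + ν * z ^ α) * ((y+z) ^ α - y ^ α)
          + z * (1 + ν * y ^ α) * ((y+z) ^ α - z ^ α) := by
        have : 0 ≤ (1 - (2:ℝ) ^ (-α)) * (y * (1 + ν * z ^ α) * (y+z) ^ α) :=
          mul_nonneg (by linarith) (by positivity)
        linarith
      have step2 : (1 - (2:ℝ) ^ (-α)) * (y * (1 + ν * z ^ α) * (y+z) ^ α) * (y+z) ^ (2+α)
          ≤ (y * (1 + ν * z ^ α) * ((y+z) ^ α - y ^ α)
            + z * (1 + ν * y ^ α) * ((y+z) ^ α - z ^ α)) * ((y+z) ^ (2+α) + y ^ (2+α)) :=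
        mul_le_mul lb (le_add_of_nonneg_right (by positivity)) (by positivity) hT0
      refine le_trans ?_ step2
      rw [idC hx0 α]
      have hscal : (1 + ν * (y+z) ^ α) * (1 + ν * (y+z) ^ α)
          ≤ 8 * (1+ν)^2 * ((y+z) ^ α * (y+z) ^ α) := scal2 hν hu
      have core : z * ((1 + ν * (y+z) ^ α) * (1 + ν * y ^ α)) * ((y+z) * y)
          ≤ y * (1 + ν * z ^ α) * (y+z) ^ α * ((y+z) ^ α * ((y+z) * (y+z))) * (8 * (1+ν)^2) := by
        have hfyx : (1 + ν * y ^ α) ≤ (1 + ν * (y+z) ^ α) := by linarith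
        have c1 : z * ((1 + ν * (y+z) ^ α) * (1 + ν * y ^ α)) * ((y+z) * y)
            ≤ (y+z) * ((1 + ν * (y+z) ^ α) * (1 + ν * (y+z) ^ α)) * ((y+z) * y) := by
          apply mul_le_mul_of_nonneg_right _ (by positivity : (0:ℝ) ≤ (y+z) * y)
          apply mul_le_mul (by linarith) (mul_le_mul_of_nonneg_left hfyx (by positivity))
            (by positivity) hx0.le
        have c2 : (y+z) * ((1 + ν * (y+z) ^ α) * (1 + ν * (y+z) ^ α)) * ((y+z) * y)
            ≤ (y+z) * (8 * (1+ν)^2 * ((y+z) ^ α * (y+z) ^ α)) * ((y+z) * y) := by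
          apply mul_le_mul_of_nonneg_right (mul_le_mul_of_nonneg_left hscal hx0.le)
            (by positivity : (0:ℝ) ≤ (y+z) * y)
        have c3 : (y+z) * (8 * (1+ν)^2 * ((y+z) ^ α * (y+z) ^ α)) * ((y+z) * y)
            ≤ (y * (1 + ν * z ^ α)) * (8 * (1+ν)^2 * ((y+z) ^ α * (y+z) ^ α)) * ((y+z) * (y+z)) := by
          have hc : (0:ℝ) ≤ (ν * z ^ α) * ((8 * (1+ν)^2 * ((y+z) ^ α * (y+z) ^ α)) * (((y+z) * (y+z)) * y)) :=
            mul_nonneg (by positivity) (mul_nonneg (by positivity) (by positivity))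
          linarith [hc]
        calc z * ((1 + ν * (y+z) ^ α) * (1 + ν * y ^ α)) * ((y+z) * y) ≤ _ := c1
          _ ≤ _ := c2
          _ ≤ (y * (1 + ν * z ^ α)) * (8 * (1+ν)^2 * ((y+z) ^ α * (y+z) ^ α)) * ((y+z) * (y+z)) := c3
          _ = y * (1 + ν * z ^ α) * (y+z) ^ α * ((y+z) ^ α * ((y+z) * (y+z))) * (8 * (1+ν)^2) := by ring
      calc (1 - (2:ℝ) ^ (-α)) / (8 * (1 + ν) ^ 2)
            * (z * ((1 + ν * (y+z) ^ α) * (1 + ν * y ^ α)) * ((y+z) * y))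
          ≤ (1 - (2:ℝ) ^ (-α)) / (8 * (1 + ν) ^ 2)
            * (y * (1 + ν * z ^ α) * (y+z) ^ α * ((y+z) ^ α * ((y+z) * (y+z))) * (8 * (1+ν)^2)) := by
            apply mul_le_mul_of_nonneg_left core (div_nonneg (by linarith) (by positivity))
        _ = (1 - (2:ℝ) ^ (-α)) * (y * (1 + ν * z ^ α) * (y+z) ^ α) * ((y+z) ^ α * ((y+z) * (y+z))) := by
            field_simp

private lemma key {ν α : ℝ} (hν : 0 < ν) (hα0 : 0 < α) (hα1 : α < 1)
    {x y z T : ℝ} (hx : 0 < x) (hy : 0 < y) (hz : 0 < z)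
    (hcon : 1 ≤ x ^ 2 + y ^ 2)
    (hcase :
      (z = x + y ∧ T = x * (1 + ν * y ^ α) * (z ^ α - x ^ α)
          + y * (1 + ν * x ^ α) * (z ^ α - y ^ α))
      ∨ (x = y + z ∧ T = y * (1 + ν * z ^ α) * (x ^ α - y ^ α)
          + z * (1 + ν * y ^ α) * (x ^ α - z ^ α))
      ∨ (y = x + z ∧ T = x * (1 + ν * z ^ α) * (y ^ α - x ^ α)
          + z * (1 + ν * x ^ α) * (y ^ α - z ^ α))) :
    T * (x ^ (2 - α) + y ^ (2 - α))
      ≤ 15 * (z * ((1 + ν * x ^ α) * (1 + ν * y ^ α)) * (x * y)) ∧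
    (1 - (2:ℝ) ^ (-α)) / (8 * (1 + ν) ^ 2)
        * (z * ((1 + ν * x ^ α) * (1 + ν * y ^ α)) * (x * y))
      ≤ T * (x ^ (2 + α) + y ^ (2 + α)) := by
  rcases hcase with ⟨hzxy, hT⟩ | ⟨hxyz, hT⟩ | ⟨hyxz, hT⟩
  · subst hT
    rcases le_total y x with h | h
    · exact estA hν hα0 hα1 hx hy hzxy h hcon
    · obtain ⟨IA, IB⟩ := estA hν hα0 hα1 hy hx (by linarith) h (by linarith)
      constructor
      · calc (x * (1 + ν * y ^ α) * (z ^ α - x ^ α) + y * (1 + ν * x ^ α) * (z ^ α - y ^ α))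
              * (x ^ (2 - α) + y ^ (2 - α))
            = (y * (1 + ν * x ^ α) * (z ^ α - y ^ α) + x * (1 + ν * y ^ α) * (z ^ α - x ^ α))
              * (y ^ (2 - α) + x ^ (2 - α)) := by ring
          _ ≤ 15 * (z * ((1 + ν * y ^ α) * (1 + ν * x ^ α)) * (y * x)) := IA
          _ = 15 * (z * ((1 + ν * x ^ α) * (1 + ν * y ^ α)) * (x * y)) := by ring
      · calc (1 - (2:ℝ) ^ (-α)) / (8 * (1 + ν) ^ 2)
              * (z * ((1 + ν * x ^ α) * (1 + ν * y ^ α)) * (x * y))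
            = (1 - (2:ℝ) ^ (-α)) / (8 * (1 + ν) ^ 2)
              * (z * ((1 + ν * y ^ α) * (1 + ν * x ^ α)) * (y * x)) := by ring
          _ ≤ (y * (1 + ν * x ^ α) * (z ^ α - y ^ α) + x * (1 + ν * y ^ α) * (z ^ α - x ^ α))
              * (y ^ (2 + α) + x ^ (2 + α)) := IB
          _ = (x * (1 + ν * y ^ α) * (z ^ α - x ^ α) + y * (1 + ν * x ^ α) * (z ^ α - y ^ α))
              * (x ^ (2 + α) + y ^ (2 + α)) := by ring
  · subst hT
    exact estB hν hα0 hα1 hy hz hxyz hcon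
  · subst hT
    obtain ⟨IA, IB⟩ := estB hν hα0 hα1 hx hz hyxz (by linarith)
    constructor
    · calc (x * (1 + ν * z ^ α) * (y ^ α - x ^ α) + z * (1 + ν * x ^ α) * (y ^ α - z ^ α))
            * (x ^ (2 - α) + y ^ (2 - α))
          = (x * (1 + ν * z ^ α) * (y ^ α - x ^ α) + z * (1 + ν * x ^ α) * (y ^ α - z ^ α))
            * (y ^ (2 - α) + x ^ (2 - α)) := by ring
        _ ≤ 15 * (z * ((1 + ν * y ^ α) * (1 + ν * x ^ α)) * (y * x)) := IA
        _ = 15 * (z * ((1 + ν * x ^ α) * (1 + ν * y ^ α)) * (x * y)) := by ring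
    · calc (1 - (2:ℝ) ^ (-α)) / (8 * (1 + ν) ^ 2)
            * (z * ((1 + ν * x ^ α) * (1 + ν * y ^ α)) * (x * y))
          = (1 - (2:ℝ) ^ (-α)) / (8 * (1 + ν) ^ 2)
            * (z * ((1 + ν * y ^ α) * (1 + ν * x ^ α)) * (y * x)) := by ring
        _ ≤ (x * (1 + ν * z ^ α) * (y ^ α - x ^ α) + z * (1 + ν * x ^ α) * (y ^ α - z ^ α))
            * (y ^ (2 + α) + x ^ (2 + α)) := IB
        _ = (x * (1 + ν * z ^ α) * (y ^ α - x ^ α) + z * (1 + ν * x ^ α) * (y ^ α - z ^ α))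
            * (x ^ (2 + α) + y ^ (2 + α)) := by ring



/-- high-frequency bounds on the multiplier: there are `C₁, C₂ > 0` such that
for all `k, l` with `k ≠ 0`, `l ≠ 0`, `k ≠ l`, `N(k−l,l) ≠ 0` and `(k−l)² + l² ≥ 1`,
`C₁(|k−l|^{1−α}/|l| + |l|^{1−α}/|k−l|) ≤ |m(k−l,l)| ≤ C₂(|k−l|^{1+α}/|l| + |l|^{1+α}/|k−l|)`. -/
theorem fracM_high_frequency_bounds (κ μ lam ν α : ℝ) (hlam : 0 < lam) (hν : 0 < ν)
    (hκνμ : κ * ν + μ ≠ 0) (hα : α ∈ Set.Ioo (0 : ℝ) 1) :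
    ∃ C₁ C₂ : ℝ, 0 < C₁ ∧ 0 < C₂ ∧
      ∀ k l : ℝ, k ≠ 0 → l ≠ 0 → k ≠ l → fracN ν α (k - l) l ≠ 0 →
        1 ≤ (k - l) ^ 2 + l ^ 2 →
        C₁ * (|k - l| ^ (1 - α) / |l| + |l| ^ (1 - α) / |k - l|)
            ≤ |fracM κ μ lam ν α (k - l) l| ∧
          |fracM κ μ lam ν α (k - l) l|
            ≤ C₂ * (|k - l| ^ (1 + α) / |l| + |l| ^ (1 + α) / |k - l|) := by
  obtain ⟨hα0, hα1⟩ := hα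
  have habs : (0:ℝ) < |κ * ν + μ| := abs_pos.mpr hκνμ
  have hτ1 : (2:ℝ) ^ (-α) < 1 := Real.rpow_lt_one_of_one_lt_of_neg one_lt_two (by linarith)
  have hτ0 : (0:ℝ) < (2:ℝ) ^ (-α) := Real.rpow_pos_of_pos (by norm_num) _
  refine ⟨lam / (30 * |κ * ν + μ|),
    4 * (1 + ν) ^ 2 * lam / (|κ * ν + μ| * (1 - (2:ℝ) ^ (-α))),
    div_pos hlam (by positivity),
    div_pos (by positivity) (mul_pos habs (by linarith)), ?_⟩
  intro k l hk hl hkl hN hcon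
  set p := k - l with hpdef
  set q := l with hqdef
  have hpq : p + q = k := by rw [hpdef, hqdef]; ring
  have hp0 : p ≠ 0 := sub_ne_zero.mpr hkl
  have hq0 : q ≠ 0 := hl
  have hs0 : p + q ≠ 0 := by rw [hpq]; exact hk
  have hX : (0:ℝ) < |p| := abs_pos.mpr hp0
  have hY : (0:ℝ) < |q| := abs_pos.mpr hq0
  have hZ : (0:ℝ) < |p + q| := abs_pos.mpr hs0
  have hcon' : 1 ≤ |p| ^ 2 + |q| ^ 2 := by rw [sq_abs, sq_abs]; exact hcon
  have hT0 : (0:ℝ) < |fracN ν α p q| := abs_pos.mpr hN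
  have hNalt : fracN ν α p q
      = p * (1 + ν * |q| ^ α) * (|p| ^ α - |p + q| ^ α)
        + q * (1 + ν * |p| ^ α) * (|q| ^ α - |p + q| ^ α) := by
    rw [fracN]; ring
  have hcase :
      (|p + q| = |p| + |q| ∧ |fracN ν α p q|
          = |p| * (1 + ν * |q| ^ α) * (|p + q| ^ α - |p| ^ α)
            + |q| * (1 + ν * |p| ^ α) * (|p + q| ^ α - |q| ^ α))
      ∨ (|p| = |q| + |p + q| ∧ |fracN ν α p q|
          = |q| * (1 + ν * |p + q| ^ α) * (|p| ^ α - |q| ^ α)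
            + |p + q| * (1 + ν * |q| ^ α) * (|p| ^ α - |p + q| ^ α))
      ∨ (|q| = |p| + |p + q| ∧ |fracN ν α p q|
          = |p| * (1 + ν * |p + q| ^ α) * (|q| ^ α - |p| ^ α)
            + |p + q| * (1 + ν * |p| ^ α) * (|q| ^ α - |p + q| ^ α)) := by
    rcases hp0.lt_or_gt with hp' | hp' <;> rcases hq0.lt_or_gt with hq' | hq' <;>
      rcases hs0.lt_or_gt with hs' | hs'
    · -- p<0, q<0, s<0 : case A
      left
      rw [abs_of_neg hp', abs_of_neg hq', abs_of_neg hs']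
      constructor
      · ring
      · have hD := Dnn hν hα0 (neg_pos.mpr hp') (neg_pos.mpr hq')
        rw [show -p + -q = -(p+q) by ring] at hD
        rw [hNalt, abs_of_neg hp', abs_of_neg hq', abs_of_neg hs']
        rw [show p * (1 + ν * (-q) ^ α) * ((-p) ^ α - (-(p+q)) ^ α)
            + q * (1 + ν * (-p) ^ α) * ((-q) ^ α - (-(p+q)) ^ α)
          = -p * (1 + ν * (-q) ^ α) * ((-(p+q)) ^ α - (-p) ^ α)
            + -q * (1 + ν * (-p) ^ α) * ((-(p+q)) ^ α - (-q) ^ α) by ring]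
        exact abs_of_nonneg hD
    · -- p<0, q<0, s>0 : impossible
      exfalso; linarith
    · -- p<0, q>0, s<0 : case B  (|p| = |q| + |p+q|)
      right; left
      rw [abs_of_neg hp', abs_of_pos hq', abs_of_neg hs']
      constructor
      · ring
      · have hD := Dnn hν hα0 hq' (neg_pos.mpr hs')
        rw [hNalt, abs_of_neg hp', abs_of_pos hq', abs_of_neg hs']
        rw [show p * (1 + ν * q ^ α) * ((-p) ^ α - (-(p+q)) ^ α)
            + q * (1 + ν * (-p) ^ α) * (q ^ α - (-(p+q)) ^ α)
          = -(q * (1 + ν * (-(p+q)) ^ α) * ((-p) ^ α - q ^ α)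
            + -(p+q) * (1 + ν * q ^ α) * ((-p) ^ α - (-(p+q)) ^ α)) by ring]
        rw [abs_neg]
        apply abs_of_nonneg
        calc (0:ℝ) ≤ q * (1 + ν * (-(p+q)) ^ α) * ((q + -(p+q)) ^ α - q ^ α)
              + -(p+q) * (1 + ν * q ^ α) * ((q + -(p+q)) ^ α - (-(p+q)) ^ α) := hD
          _ = q * (1 + ν * (-(p+q)) ^ α) * ((-p) ^ α - q ^ α)
              + -(p+q) * (1 + ν * q ^ α) * ((-p) ^ α - (-(p+q)) ^ α) := by
              rw [show q + -(p+q) = -p by ring]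
    · -- p<0, q>0, s>0 : case C  (|q| = |p| + |p+q|)
      right; right
      rw [abs_of_neg hp', abs_of_pos hq', abs_of_pos hs']
      constructor
      · ring
      · have hD := Dnn hν hα0 (neg_pos.mpr hp') hs'
        rw [hNalt, abs_of_neg hp', abs_of_pos hq', abs_of_pos hs']
        rw [show p * (1 + ν * q ^ α) * ((-p) ^ α - (p+q) ^ α)
            + q * (1 + ν * (-p) ^ α) * (q ^ α - (p+q) ^ α)
          = -p * (1 + ν * (p+q) ^ α) * (q ^ α - (-p) ^ α)
            + (p+q) * (1 + ν * (-p) ^ α) * (q ^ α - (p+q) ^ α) by ring]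
        apply abs_of_nonneg
        calc (0:ℝ) ≤ -p * (1 + ν * (p+q) ^ α) * ((-p + (p+q)) ^ α - (-p) ^ α)
              + (p+q) * (1 + ν * (-p) ^ α) * ((-p + (p+q)) ^ α - (p+q) ^ α) := hD
          _ = -p * (1 + ν * (p+q) ^ α) * (q ^ α - (-p) ^ α)
              + (p+q) * (1 + ν * (-p) ^ α) * (q ^ α - (p+q) ^ α) := by
              rw [show -p + (p+q) = q by ring]
    · -- p>0, q<0, s<0 : case C  (|q| = |p| + |p+q|)
      right; right
      rw [abs_of_pos hp', abs_of_neg hq', abs_of_neg hs']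
      constructor
      · ring
      · have hD := Dnn hν hα0 hp' (neg_pos.mpr hs')
        rw [hNalt, abs_of_pos hp', abs_of_neg hq', abs_of_neg hs']
        rw [show p * (1 + ν * (-q) ^ α) * (p ^ α - (-(p+q)) ^ α)
            + q * (1 + ν * p ^ α) * ((-q) ^ α - (-(p+q)) ^ α)
          = -(p * (1 + ν * (-(p+q)) ^ α) * ((-q) ^ α - p ^ α)
            + -(p+q) * (1 + ν * p ^ α) * ((-q) ^ α - (-(p+q)) ^ α)) by ring]
        rw [abs_neg]
        apply abs_of_nonneg
        calc (0:ℝ) ≤ p * (1 + ν * (-(p+q)) ^ α) * ((p + -(p+q)) ^ α - p ^ α)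
              + -(p+q) * (1 + ν * p ^ α) * ((p + -(p+q)) ^ α - (-(p+q)) ^ α) := hD
          _ = p * (1 + ν * (-(p+q)) ^ α) * ((-q) ^ α - p ^ α)
              + -(p+q) * (1 + ν * p ^ α) * ((-q) ^ α - (-(p+q)) ^ α) := by
              rw [show p + -(p+q) = -q by ring]
    · -- p>0, q<0, s>0 : case B (|p| = |q| + |p+q|)
      right; left
      rw [abs_of_pos hp', abs_of_neg hq', abs_of_pos hs']
      constructor
      · ring
      · have hD := Dnn hν hα0 (neg_pos.mpr hq') hs'
        rw [hNalt, abs_of_pos hp', abs_of_neg hq', abs_of_pos hs']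
        rw [show p * (1 + ν * (-q) ^ α) * (p ^ α - (p+q) ^ α)
            + q * (1 + ν * p ^ α) * ((-q) ^ α - (p+q) ^ α)
          = -q * (1 + ν * (p+q) ^ α) * (p ^ α - (-q) ^ α)
            + (p+q) * (1 + ν * (-q) ^ α) * (p ^ α - (p+q) ^ α) by ring]
        apply abs_of_nonneg
        calc (0:ℝ) ≤ -q * (1 + ν * (p+q) ^ α) * ((-q + (p+q)) ^ α - (-q) ^ α)
              + (p+q) * (1 + ν * (-q) ^ α) * ((-q + (p+q)) ^ α - (p+q) ^ α) := hD
          _ = -q * (1 + ν * (p+q) ^ α) * (p ^ α - (-q) ^ α)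
              + (p+q) * (1 + ν * (-q) ^ α) * (p ^ α - (p+q) ^ α) := by
              rw [show -q + (p+q) = p by ring]
    · -- p>0, q>0, s<0 : impossible
      exfalso; linarith
    · -- p>0, q>0, s>0 : case A
      left
      rw [abs_of_pos hp', abs_of_pos hq', abs_of_pos hs']
      constructor
      · ring
      · have hD := Dnn hν hα0 hp' hq'
        rw [hNalt, abs_of_pos hp', abs_of_pos hq', abs_of_pos hs']
        rw [show p * (1 + ν * q ^ α) * (p ^ α - (p+q) ^ α)
            + q * (1 + ν * p ^ α) * (q ^ α - (p+q) ^ α)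
          = -(p * (1 + ν * q ^ α) * ((p+q) ^ α - p ^ α)
            + q * (1 + ν * p ^ α) * ((p+q) ^ α - q ^ α)) by ring]
        rw [abs_neg]
        exact abs_of_nonneg hD
  obtain ⟨I1, I2⟩ := key hν hα0 hα1 hX hY hZ hcon' (by
    rcases hcase with ⟨h1, h2⟩ | ⟨h1, h2⟩ | ⟨h1, h2⟩
    · exact Or.inl ⟨h1, h2⟩
    · exact Or.inr (Or.inl ⟨h1, h2⟩)
    · exact Or.inr (Or.inr ⟨h1, h2⟩))
  have hFX : (0:ℝ) < 1 + ν * |p| ^ α := by positivity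
  have hFY : (0:ℝ) < 1 + ν * |q| ^ α := by positivity
  have hM : |fracM κ μ lam ν α p q|
      = lam * |p + q| * ((1 + ν * |p| ^ α) * (1 + ν * |q| ^ α))
        / (2 * |κ * ν + μ| * |fracN ν α p q|) := by
    rw [fracM, abs_div]
    congr 1
    · rw [abs_mul, abs_mul, abs_mul, abs_of_pos hlam, abs_of_pos hFX, abs_of_pos hFY]
      ring
    · rw [abs_mul, abs_mul]
      norm_num
  have ex1 : |p| ^ (1 - α) * |p| = |p| ^ (2 - α) := by
    have h := Real.rpow_add hX (1 - α) 1
    rw [Real.rpow_one] at h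
    rw [show (1 - α) + 1 = 2 - α by ring] at h
    exact h.symm
  have ey1 : |q| ^ (1 - α) * |q| = |q| ^ (2 - α) := by
    have h := Real.rpow_add hY (1 - α) 1
    rw [Real.rpow_one] at h
    rw [show (1 - α) + 1 = 2 - α by ring] at h
    exact h.symm
  have ex2 : |p| ^ (1 + α) * |p| = |p| ^ (2 + α) := by
    have h := Real.rpow_add hX (1 + α) 1
    rw [Real.rpow_one] at h
    rw [show (1 + α) + 1 = 2 + α by ring] at h
    exact h.symm
  have ey2 : |q| ^ (1 + α) * |q| = |q| ^ (2 + α) := by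
    have h := Real.rpow_add hY (1 + α) 1
    rw [Real.rpow_one] at h
    rw [show (1 + α) + 1 = 2 + α by ring] at h
    exact h.symm
  have hsum1 : |p| ^ (1 - α) / |q| + |q| ^ (1 - α) / |p|
      = (|p| ^ (2 - α) + |q| ^ (2 - α)) / (|p| * |q|) := by
    rw [div_add_div _ _ hY.ne' hX.ne']
    rw [show |p| ^ (1 - α) * |p| + |q| * |q| ^ (1 - α)
        = |p| ^ (2 - α) + |q| ^ (2 - α) from by linear_combination ex1 + ey1]
    rw [mul_comm |q| |p|]
  have hsum2 : |p| ^ (1 + α) / |q| + |q| ^ (1 + α) / |p|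
      = (|p| ^ (2 + α) + |q| ^ (2 + α)) / (|p| * |q|) := by
    rw [div_add_div _ _ hY.ne' hX.ne']
    rw [show |p| ^ (1 + α) * |p| + |q| * |q| ^ (1 + α)
        = |p| ^ (2 + α) + |q| ^ (2 + α) from by linear_combination ex2 + ey2]
    rw [mul_comm |q| |p|]
  constructor
  · rw [hM, hsum1, ← mul_div_assoc, div_le_div_iff₀ (by positivity) (by positivity)]
    have e : lam / (30 * |κ * ν + μ|) * (|p| ^ (2 - α) + |q| ^ (2 - α))
          * (2 * |κ * ν + μ| * |fracN ν α p q|)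
        = lam / 15 * (|fracN ν α p q| * (|p| ^ (2 - α) + |q| ^ (2 - α))) := by
      field_simp
      ring
    rw [e]
    calc lam / 15 * (|fracN ν α p q| * (|p| ^ (2 - α) + |q| ^ (2 - α)))
        ≤ lam / 15 * (15 * (|p + q| * ((1 + ν * |p| ^ α) * (1 + ν * |q| ^ α)) * (|p| * |q|))) :=
          mul_le_mul_of_nonneg_left I1 (by positivity)
      _ = lam * |p + q| * ((1 + ν * |p| ^ α) * (1 + ν * |q| ^ α)) * (|p| * |q|) := by ring
  · rw [hM, hsum2, ← mul_div_assoc, div_le_div_iff₀ (by positivity) (by positivity)]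
    have hD0 : (0:ℝ) < 1 - (2:ℝ) ^ (-α) := by linarith
    have hc0 : (0:ℝ) ≤ 8 * (1 + ν) ^ 2 * lam / (1 - (2:ℝ) ^ (-α)) := by
      apply div_nonneg (by positivity) hD0.le
    have step := mul_le_mul_of_nonneg_left I2 hc0
    have eL : 8 * (1 + ν) ^ 2 * lam / (1 - (2:ℝ) ^ (-α))
          * ((1 - (2:ℝ) ^ (-α)) / (8 * (1 + ν) ^ 2)
            * (|p + q| * ((1 + ν * |p| ^ α) * (1 + ν * |q| ^ α)) * (|p| * |q|)))
        = lam * |p + q| * ((1 + ν * |p| ^ α) * (1 + ν * |q| ^ α)) * (|p| * |q|) := by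
      field_simp
    have eR : 8 * (1 + ν) ^ 2 * lam / (1 - (2:ℝ) ^ (-α))
          * (|fracN ν α p q| * (|p| ^ (2 + α) + |q| ^ (2 + α)))
        = 4 * (1 + ν) ^ 2 * lam / (|κ * ν + μ| * (1 - (2:ℝ) ^ (-α)))
          * (|p| ^ (2 + α) + |q| ^ (2 + α)) * (2 * |κ * ν + μ| * |fracN ν α p q|) := by
      field_simp
      ring_nf
      rw [mul_inv_cancel₀ (show |ν * κ + μ| ≠ 0 by rw [mul_comm ν κ]; exact habs.ne'), one_mul]
    rw [eL, eR] at step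
    exact step
end
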